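/- Let A be a commutative ring and G a finite group whose order is invertible in A. Let B be a commutative A-algebra on which G acts by A-algebra automorphisms, and let M be a B-module equipped with an additive G-action satisfying g•(b·m) = (g•b)·(g•m) for all g ∈ G, b ∈ B, m ∈ M. Let I be any A-module. Make Hom_A(B, I) a B-module by (b·f)(c) = f(bc) and let G act on it by (g•f)(c) = f(g⁻¹•c). Let M^G = {m ∈ M : g•m = m for all g ∈ G}, an A-submodule of M. Then the map sending a G-equivariant B-linear map φ : M → Hom_A(B, I) to the A-linear map M^G → I, m ↦ φ(m)(1_B), is an isomorphism of A-modules Hom_B^G(M, Hom_A(B, I)) ≅ Hom_A(M^G, I). -/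

import Mathlib

/-- The (multiplicative) group structure on `M ≃+ M` that older Mathlib provided via `AddAut`:
multiplication is composition. -/
instance addEquivSelfGroupOld (M : Type) [Add M] : Group (M ≃+ M) where
  mul g h := AddEquiv.trans h g
  one := AddEquiv.refl _
  inv := AddEquiv.symm
  mul_assoc _ _ _ := rfl
  one_mul _ := rfl
  mul_one _ := rfl
  inv_mul_cancel := AddEquiv.self_trans_symm

/-- The `A`-submodule of `G`-invariant elements `M^G` of a `B`-module `M` with a compatible
`G`-action (`G` acting on the `A`-algebra `B` by `A`-algebra automorphisms `ρ`). -/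
def invariantsSubmodule (A : Type) [CommRing A] {G : Type} [Group G]
    {B : Type} [CommRing B] [Algebra A B] (ρ : G →* (B ≃ₐ[A] B))
    {M : Type} [AddCommGroup M] [Module A M] [Module B M] [IsScalarTower A B M]
    (act : G →* (M ≃+ M))
    (hcompat : ∀ (g : G) (b : B) (m : M), act g (b • m) = (ρ g b) • (act g m)) :
    Submodule A M where
  carrier := {m : M | ∀ g : G, act g m = m}
  add_mem' := by
    intro m₁ m₂ h₁ h₂ g
    rw [map_add, h₁ g, h₂ g]
  zero_mem' := by
    intro g
    exact map_zero _
  smul_mem' := by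
    intro a m hm g
    rw [← algebraMap_smul B a m, hcompat, AlgEquiv.commutes, hm g]

/-- Let `A` be a commutative ring and `G` a finite group whose order is invertible
in `A`.  Let `B` be a commutative `A`-algebra on which `G` acts by `A`-algebra automorphisms `ρ`,
and `M` a `B`-module with an additive `G`-action `act` satisfying `g • (b • m) = (g • b) • (g • m)`.
Let `I` be any `A`-module.  Make `Hom_A(B, I)` a `B`-module by `(b • f) c = f (b * c)` and let `G`
act by `(g • f) c = f (g⁻¹ • c)`.  Then the map sending a `G`-equivariant `B`-linear map
`φ : M → Hom_A(B, I)` to the `A`-linear map `M^G → I`, `m ↦ φ m 1`, is an isomorphism of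
`A`-modules `Hom_B^G(M, Hom_A(B, I)) ≅ Hom_A(M^G, I)`; i.e. for each `ψ : M^G →ₗ[A] I` there is a
unique `B`-linear `G`-equivariant `φ` with `φ m 1 = ψ m` for all `m ∈ M^G`. -/
theorem stmt3 (A : Type) [CommRing A] (G : Type) [Group G] [Finite G]
    (hord : IsUnit ((Nat.card G : A)))
    (B : Type) [CommRing B] [Algebra A B] (ρ : G →* (B ≃ₐ[A] B))
    (M : Type) [AddCommGroup M] [Module A M] [Module B M] [IsScalarTower A B M]
    (act : G →* (M ≃+ M))
    (hcompat : ∀ (g : G) (b : B) (m : M), act g (b • m) = (ρ g b) • (act g m))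
    (I : Type) [AddCommGroup I] [Module A I]
    (ψ : (invariantsSubmodule A ρ act hcompat) →ₗ[A] I) :
    ∃! φ : M →ₗ[A] (B →ₗ[A] I),
      (∀ (b : B) (m : M) (c : B), φ (b • m) c = φ m (b * c)) ∧
      (∀ (g : G) (m : M) (c : B), φ (act g m) c = φ m (ρ g⁻¹ c)) ∧
      (∀ m : (invariantsSubmodule A ρ act hcompat), φ m 1 = ψ m) := by
  classical
  have : Fintype G := Fintype.ofFinite G
  set u : A := ↑hord.unit⁻¹ with hu
  have hucard : u * (Nat.card G : A) = 1 := hord.val_inv_mul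
  have actA : ∀ (g : G) (a : A) (m : M), act g (a • m) = a • act g m := by
    intro g a m
    rw [← algebraMap_smul B a m, hcompat, AlgEquiv.commutes, algebraMap_smul]
  have actmul : ∀ (h g : G) (x : M), act h (act g x) = act (h * g) x := by
    intro h g x; simp [map_mul]; rfl
  set e : M → B → M := fun m c => u • ∑ g : G, act g (c • m) with he
  have hinv : ∀ m c, e m c ∈ invariantsSubmodule A ρ act hcompat := by
    intro m c h
    show act h (u • ∑ g : G, act g (c • m)) = u • ∑ g : G, act g (c • m)
    rw [actA]
    congr 1
    rw [map_sum]
    exact Fintype.sum_equiv (Equiv.mulLeft h) _ _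
      (fun g => by simp only [Equiv.coe_mulLeft]; exact actmul h g (c • m))
  set E : M → B → (invariantsSubmodule A ρ act hcompat) :=
    fun m c => ⟨e m c, hinv m c⟩ with hE
  set φ : M →ₗ[A] (B →ₗ[A] I) := LinearMap.mk₂ A (fun m c => ψ (E m c))
    (fun m₁ m₂ c => by
      have hle : E (m₁ + m₂) c = E m₁ c + E m₂ c := by
        apply Subtype.ext
        show e (m₁ + m₂) c = e m₁ c + e m₂ c
        simp only [he, smul_add, map_add, Finset.sum_add_distrib]
      show ψ (E (m₁ + m₂) c) = ψ (E m₁ c) + ψ (E m₂ c)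
      rw [hle, map_add])
    (fun a m c => by
      have hle : E (a • m) c = a • E m c := by
        apply Subtype.ext
        show e (a • m) c = a • e m c
        simp only [he]
        rw [smul_comm a u]
        congr 1
        rw [Finset.smul_sum]
        refine Finset.sum_congr rfl (fun g _ => ?_)
        rw [smul_comm c a, actA]
      show ψ (E (a • m) c) = a • ψ (E m c)
      rw [hle, map_smul])
    (fun m c₁ c₂ => by
      have hle : E m (c₁ + c₂) = E m c₁ + E m c₂ := by
        apply Subtype.ext
        show e m (c₁ + c₂) = e m c₁ + e m c₂
        simp only [he, add_smul, map_add, Finset.sum_add_distrib, smul_add]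
      show ψ (E m (c₁ + c₂)) = ψ (E m c₁) + ψ (E m c₂)
      rw [hle, map_add])
    (fun a m c => by
      have hle : E m (a • c) = a • E m c := by
        apply Subtype.ext
        show e m (a • c) = a • e m c
        simp only [he]
        rw [smul_comm a u]
        congr 1
        rw [Finset.smul_sum]
        refine Finset.sum_congr rfl (fun g _ => ?_)
        rw [smul_assoc, actA]
      show ψ (E m (a • c)) = a • ψ (E m c)
      rw [hle, map_smul])
    with hφ
  have hφ_apply : ∀ m c, φ m c = ψ (E m c) := fun m c => rfl
  have hρinv : ∀ (g : G) (c : B), ρ g (ρ g⁻¹ c) = c := by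
    intro g c
    have h1 : ρ g * ρ g⁻¹ = 1 := by rw [← map_mul, mul_inv_cancel, map_one]
    calc ρ g (ρ g⁻¹ c) = (ρ g * ρ g⁻¹) c := rfl
      _ = c := by rw [h1]; rfl
  have prop1 : ∀ (b : B) (m : M) (c : B), φ (b • m) c = φ m (b * c) := by
    intro b m c
    rw [hφ_apply, hφ_apply]; congr 1; apply Subtype.ext
    show e (b • m) c = e m (b * c)
    simp only [he, smul_smul, mul_comm c b]
  have prop2 : ∀ (g : G) (m : M) (c : B), φ (act g m) c = φ m (ρ g⁻¹ c) := by
    intro g m c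
    rw [hφ_apply, hφ_apply]; congr 1; apply Subtype.ext
    show e (act g m) c = e m (ρ g⁻¹ c)
    simp only [he]
    congr 1
    refine Fintype.sum_equiv (Equiv.mulRight g) _ _ (fun h => ?_)
    have hcm : c • act g m = act g (ρ g⁻¹ c • m) := by
      rw [hcompat, hρinv]
    rw [hcm, actmul]
    rfl
  have prop3 : ∀ m : (invariantsSubmodule A ρ act hcompat), φ m 1 = ψ m := by
    intro m
    rw [hφ_apply]; congr 1; apply Subtype.ext
    show e (m : M) 1 = (m : M)
    simp only [he, one_smul]
    rw [Finset.sum_congr rfl (fun g _ => m.2 g), Finset.sum_const,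
      Finset.card_univ, ← Nat.card_eq_fintype_card, ← Nat.cast_smul_eq_nsmul A,
      smul_smul, hucard, one_smul]
  refine ⟨φ, ⟨prop1, prop2, prop3⟩, ?_⟩
  rintro φ' ⟨h1, h2, h3⟩
  apply LinearMap.ext; intro m; apply LinearMap.ext; intro c
  have step1 : φ' m c = φ' (c • m) 1 := by rw [h1 c m 1, mul_one]
  have step2 : ∀ (g : G) (x : M), φ' (act g x) 1 = φ' x 1 := by
    intro g x
    rw [h2 g x 1, map_one]
  have step3 : φ' (c • m) 1 = φ' (e m c) 1 := by
    show _ = φ' (u • ∑ g : G, act g (c • m)) 1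
    rw [map_smul φ' u (∑ g : G, act g (c • m)), LinearMap.smul_apply, map_sum, LinearMap.sum_apply,
      Finset.sum_congr rfl (fun g _ => step2 g (c • m)), Finset.sum_const,
      Finset.card_univ, ← Nat.card_eq_fintype_card, ← Nat.cast_smul_eq_nsmul A,
      smul_smul, hucard, one_smul]
  show φ' m c = φ m c
  rw [step1, step3, hφ_apply]
  exact h3 (E m c)
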